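/- For 1<q<p, the function h(s) = ((p−q)/q · a(s) + 1/s)^p / ((p/q) a(s) + 1)^{p−q}, where a(s) = ω_q(s)^q/s − 1, is strictly decreasing on (0,1), with h(1) = 1 and h(s) → +∞ as s → 0⁺. -/

import Mathlib

open Real Set Filter Topology

lemma keyP {p q : ℝ} (hq : 1 < q) (hpq : q < p) {w : ℝ} (hw1 : 1 < w) :
    0 < p * ((p - q) + (1 - q) * w ^ (1 - q - 1)) * ((p - q + 1) * w - (p - q)) * (q - (q - 1) * w)
      - (p - q) * (p - q + 1) * ((p - q) * (w - 1) + w ^ (1 - q)) * (q - (q - 1) * w)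
      + q * (q - 1) * ((p - q) * (w - 1) + w ^ (1 - q)) * ((p - q + 1) * w - (p - q)) := by
  have hw0 : (0:ℝ) < w := by linarith
  have ht1 : 1 < w ^ q := (Real.one_lt_rpow_iff_of_pos hw0).mpr (Or.inl ⟨hw1, by linarith⟩)
  have ht0 : (0:ℝ) < w ^ q := by linarith
  have e1 : w ^ (1 - q) = w / w ^ q := by rw [Real.rpow_sub hw0, Real.rpow_one]
  have e2 : w ^ (1 - q - 1) = 1 / w ^ q := by
    rw [show (1:ℝ) - q - 1 = 0 - q by ring, Real.rpow_sub hw0, Real.rpow_zero]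
  have hS : 0 < (p - q) * w * (w ^ q - 1)
      + q * (q - 1) * (w - 1) * ((p - q + 1) * w - (p - q)) := by
    have h2 : 0 < (p - q + 1) * w - (p - q) := by nlinarith
    have h3 : 0 < (p - q) * w * (w ^ q - 1) :=
      mul_pos (mul_pos (by linarith) hw0) (by linarith)
    have h4 : 0 < q * (q - 1) * (w - 1) * ((p - q + 1) * w - (p - q)) :=
      mul_pos (mul_pos (mul_pos (by linarith) (by linarith)) (by linarith)) h2
    linarith
  have hEq : p * ((p - q) + (1 - q) * w ^ (1 - q - 1)) * ((p - q + 1) * w - (p - q)) * (q - (q - 1) * w)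
      - (p - q) * (p - q + 1) * ((p - q) * (w - 1) + w ^ (1 - q)) * (q - (q - 1) * w)
      + q * (q - 1) * ((p - q) * (w - 1) + w ^ (1 - q)) * ((p - q + 1) * w - (p - q))
      = p * ((p - q) * w * (w ^ q - 1)
        + q * (q - 1) * (w - 1) * ((p - q + 1) * w - (p - q))) / w ^ q := by
    rw [e1, e2]; field_simp; ring
  rw [hEq]
  exact div_pos (mul_pos (by linarith) hS) ht0


noncomputable def gfun (p q w : ℝ) : ℝ :=
  ((p - q) * (w - 1) + w ^ (1 - q)) ^ p
    / ((((p - q) + 1) * w - (p - q)) ^ (p - q) * (q - (q - 1) * w) ^ q)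

lemma gderiv {p q : ℝ} (hq : 1 < q) (hpq : q < p) {w : ℝ} (hw1 : 1 < w)
    (hwc : w < q / (q - 1)) : ∃ d, 0 < d ∧ HasDerivAt (gfun p q) d w := by
  have hw0 : (0:ℝ) < w := by linarith
  have hq1 : (0:ℝ) < q - 1 := by linarith
  have hC : 0 < q - (q - 1) * w := by
    have h1 : (q - 1) * w < (q - 1) * (q / (q - 1)) := by
      exact (mul_lt_mul_iff_right₀ hq1).mpr hwc
    have h2 : (q - 1) * (q / (q - 1)) = q := by field_simp
    linarith
  have hwq : 0 < w ^ (1 - q) := Real.rpow_pos_of_pos hw0 _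
  have hA : 0 < (p - q) * (w - 1) + w ^ (1 - q) := by nlinarith
  have hB : 0 < ((p - q) + 1) * w - (p - q) := by nlinarith
  have d1 : HasDerivAt (fun w : ℝ => (p - q) * (w - 1) + w ^ (1 - q))
      ((p - q) + (1 - q) * w ^ (1 - q - 1)) w := by
    have h := Real.hasDerivAt_rpow_const (x := w) (p := 1 - q) (Or.inl hw0.ne')
    have hl : HasDerivAt (fun w : ℝ => (p - q) * (w - 1)) (p - q) w := by
      simpa using ((hasDerivAt_id w).sub_const 1).const_mul (p - q)
    exact hl.add h
  have d2 : HasDerivAt (fun w : ℝ => ((p - q) + 1) * w - (p - q)) ((p - q) + 1) w := by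
    simpa using ((hasDerivAt_id w).const_mul ((p - q) + 1)).sub_const (p - q)
  have d3 : HasDerivAt (fun w : ℝ => q - (q - 1) * w) (-(q - 1)) w := by
    simpa using ((hasDerivAt_id w).const_mul (q - 1)).const_sub q
  have F1 := d1.rpow_const (p := p) (Or.inl hA.ne')
  have F2 := d2.rpow_const (p := p - q) (Or.inl hB.ne')
  have F3 := d3.rpow_const (p := q) (Or.inl hC.ne')
  have G := F2.mul F3
  have hGpos : 0 < (((p - q) + 1) * w - (p - q)) ^ (p - q) * (q - (q - 1) * w) ^ q :=
    mul_pos (Real.rpow_pos_of_pos hB _) (Real.rpow_pos_of_pos hC _)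
  have hg := F1.div G hGpos.ne'
  refine ⟨_, ?_, hg⟩
  apply div_pos _ (by positivity)
  -- numerator positivity
  have eA : ((p - q) * (w - 1) + w ^ (1 - q)) ^ p
      = ((p - q) * (w - 1) + w ^ (1 - q)) ^ (p - 1) * ((p - q) * (w - 1) + w ^ (1 - q)) := by
    rw [← Real.rpow_add_one hA.ne' (p - 1), show p - 1 + 1 = p by ring]
  have eB : (((p - q) + 1) * w - (p - q)) ^ (p - q)
      = (((p - q) + 1) * w - (p - q)) ^ (p - q - 1) * (((p - q) + 1) * w - (p - q)) := by
    rw [← Real.rpow_add_one hB.ne' (p - q - 1), show p - q - 1 + 1 = p - q by ring]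
  have eC : (q - (q - 1) * w) ^ q
      = (q - (q - 1) * w) ^ (q - 1) * (q - (q - 1) * w) := by
    rw [← Real.rpow_add_one hC.ne' (q - 1), show q - 1 + 1 = q by ring]
  have key := keyP hq hpq hw1
  have efac : ((p - q) + (1 - q) * w ^ (1 - q - 1)) * p * ((p - q) * (w - 1) + w ^ (1 - q)) ^ (p - 1)
        * ((((p - q) + 1) * w - (p - q)) ^ (p - q) * (q - (q - 1) * w) ^ q)
      - ((p - q) * (w - 1) + w ^ (1 - q)) ^ p
        * (((p - q) + 1) * (p - q) * (((p - q) + 1) * w - (p - q)) ^ (p - q - 1)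
            * (q - (q - 1) * w) ^ q
          + (((p - q) + 1) * w - (p - q)) ^ (p - q)
            * (-(q - 1) * q * (q - (q - 1) * w) ^ (q - 1)))
      = ((p - q) * (w - 1) + w ^ (1 - q)) ^ (p - 1)
        * (((p - q) + 1) * w - (p - q)) ^ (p - q - 1) * (q - (q - 1) * w) ^ (q - 1)
        * (p * ((p - q) + (1 - q) * w ^ (1 - q - 1)) * ((p - q + 1) * w - (p - q)) * (q - (q - 1) * w)
          - (p - q) * (p - q + 1) * ((p - q) * (w - 1) + w ^ (1 - q)) * (q - (q - 1) * w)
          + q * (q - 1) * ((p - q) * (w - 1) + w ^ (1 - q)) * ((p - q + 1) * w - (p - q))) := by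
    rw [eA, eB, eC]; ring
  simp only [Pi.mul_apply]
  rw [efac]
  have h1 : 0 < ((p - q) * (w - 1) + w ^ (1 - q)) ^ (p - 1) := Real.rpow_pos_of_pos hA _
  have h2 : 0 < (((p - q) + 1) * w - (p - q)) ^ (p - q - 1) := Real.rpow_pos_of_pos hB _
  have h3 : 0 < (q - (q - 1) * w) ^ (q - 1) := Real.rpow_pos_of_pos hC _
  exact mul_pos (mul_pos (mul_pos h1 h2) h3) key

lemma gmono {p q : ℝ} (hq : 1 < q) (hpq : q < p) :
    StrictMonoOn (gfun p q) (Ioo 1 (q / (q - 1))) := by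
  apply strictMonoOn_of_deriv_pos (convex_Ioo _ _)
  · intro x hx
    obtain ⟨d, hd, hder⟩ := gderiv hq hpq hx.1 hx.2
    exact hder.continuousAt.continuousWithinAt
  · intro x hx
    rw [interior_Ioo] at hx
    obtain ⟨d, hd, hder⟩ := gderiv hq hpq hx.1 hx.2
    rw [hder.deriv]; exact hd

lemma Hanti {q : ℝ} (hq : 1 < q) :
    StrictAntiOn (fun z : ℝ => q * z ^ (q - 1) - (q - 1) * z ^ q) (Icc 1 (q / (q - 1))) := by
  apply strictAntiOn_of_deriv_neg (convex_Icc _ _)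
  · intro x hx
    have hx0 : (0:ℝ) < x := lt_of_lt_of_le one_pos hx.1
    exact ContinuousAt.continuousWithinAt
      ((continuousAt_const.mul (Real.continuousAt_rpow_const x _ (Or.inl hx0.ne'))).sub
        (continuousAt_const.mul (Real.continuousAt_rpow_const x _ (Or.inl hx0.ne'))))
  · intro x hx
    rw [interior_Icc] at hx
    have hx1 : 1 < x := hx.1
    have hx0 : (0:ℝ) < x := by linarith
    have d : HasDerivAt (fun z : ℝ => q * z ^ (q - 1) - (q - 1) * z ^ q)
        ((q - 1) * x ^ (q - 1 - 1) * q - q * x ^ (q - 1) * (q - 1)) x := by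
      have h1 := (Real.hasDerivAt_rpow_const (x := x) (p := q - 1) (Or.inl hx0.ne')).const_mul q
      have h2 := (Real.hasDerivAt_rpow_const (x := x) (p := q) (Or.inl hx0.ne')).const_mul (q - 1)
      have := h1.sub h2
      refine this.congr_deriv ?_
      ring
    rw [d.deriv]
    have hlt : x ^ (q - 1 - 1) < x ^ (q - 1) :=
      (Real.rpow_lt_rpow_left_iff hx1).mpr (by linarith)
    have hmul := mul_lt_mul_of_pos_left hlt (show (0:ℝ) < q * (q - 1) by nlinarith)
    nlinarith

lemma H_c {q : ℝ} (hq : 1 < q) :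
    q * (q / (q - 1)) ^ (q - 1) - (q - 1) * (q / (q - 1)) ^ q = 0 := by
  have hc0 : (0:ℝ) < q / (q - 1) := div_pos (by linarith) (by linarith)
  have e : (q / (q - 1)) ^ q = (q / (q - 1)) ^ (q - 1) * (q / (q - 1)) := by
    rw [← Real.rpow_add_one hc0.ne' (q - 1), show q - 1 + 1 = q by ring]
  rw [e]
  have h3 : (q - 1) * (q / (q - 1)) = q := by
    rw [mul_div_assoc', mul_comm, mul_div_assoc, div_self (by linarith : q - 1 ≠ 0), mul_one]
  have e2 : (q - 1) * ((q / (q - 1)) ^ (q - 1) * (q / (q - 1)))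
      = q * (q / (q - 1)) ^ (q - 1) := by
    calc (q - 1) * ((q / (q - 1)) ^ (q - 1) * (q / (q - 1)))
        = ((q - 1) * (q / (q - 1))) * (q / (q - 1)) ^ (q - 1) := by ring
      _ = q * (q / (q - 1)) ^ (q - 1) := by rw [h3]
  rw [e2]; ring

/-- For `1 < q < p`, the function
`h(s) = ((p-q)/q · a(s) + 1/s)^p / ((p/q) a(s) + 1)^(p-q)`, where
`a(s) = ω_q(s)^q/s - 1`, is strictly decreasing on `(0,1)`, with `h(1) = 1` and
`h(s) → +∞` as `s → 0⁺`. -/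
theorem h_strictAnti (p q : ℝ) (hq : 1 < q) (hpq : q < p)
    (ωq : ℝ → ℝ)
    (hωq : ∀ s ∈ Icc (0 : ℝ) 1, ωq s ∈ Icc 1 (q / (q - 1)) ∧
      q * ωq s ^ (q - 1) - (q - 1) * ωq s ^ q = s) :
    StrictAntiOn
      (fun s : ℝ => ((p - q) / q * (ωq s ^ q / s - 1) + 1 / s) ^ p
        / ((p / q) * (ωq s ^ q / s - 1) + 1) ^ (p - q)) (Ioo 0 1) ∧
    ((p - q) / q * (ωq 1 ^ q / 1 - 1) + 1 / 1) ^ p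
      / ((p / q) * (ωq 1 ^ q / 1 - 1) + 1) ^ (p - q) = 1 ∧
    Tendsto
      (fun s : ℝ => ((p - q) / q * (ωq s ^ q / s - 1) + 1 / s) ^ p
        / ((p / q) * (ωq s ^ q / s - 1) + 1) ^ (p - q)) (𝓝[>] 0) atTop := by
  have hq0 : (0:ℝ) < q := by linarith
  have hq1 : (0:ℝ) < q - 1 := by linarith
  have hr : (0:ℝ) < p - q := by linarith
  have hc1 : 1 < q / (q - 1) := (one_lt_div hq1).mpr (by linarith)
  have HA := Hanti hq
  have mem1 : (1:ℝ) ∈ Icc 1 (q / (q - 1)) := ⟨le_refl 1, hc1.le⟩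
  have hqq : (q - 1) * (q / (q - 1)) = q := by
    rw [mul_div_assoc', mul_comm, mul_div_assoc, div_self (by linarith : q - 1 ≠ 0), mul_one]
  -- ω at 1
  have hω1 : ωq 1 = 1 := by
    obtain ⟨hm, he⟩ := hωq 1 ⟨zero_le_one, le_refl 1⟩
    refine HA.injOn hm mem1 ?_
    rw [he]
    simp
  -- membership in open interval
  have hωmem : ∀ s ∈ Ioo (0:ℝ) 1, ωq s ∈ Ioo 1 (q / (q - 1)) := by
    intro s hs
    obtain ⟨hm, he⟩ := hωq s ⟨hs.1.le, hs.2.le⟩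
    constructor
    · rcases eq_or_lt_of_le hm.1 with h | h
      · exfalso
        rw [← h] at he
        simp at he
        linarith [hs.2]
      · exact h
    · rcases lt_or_eq_of_le hm.2 with h | h
      · exact h
      · exfalso
        rw [h, H_c hq] at he
        linarith [hs.1]
  -- antitonicity of ω
  have hωanti : ∀ s1 ∈ Ioo (0:ℝ) 1, ∀ s2 ∈ Ioo (0:ℝ) 1, s1 < s2 → ωq s2 < ωq s1 := by
    intro s1 h1 s2 h2 hlt
    obtain ⟨hm1, he1⟩ := hωq s1 ⟨h1.1.le, h1.2.le⟩
    obtain ⟨hm2, he2⟩ := hωq s2 ⟨h2.1.le, h2.2.le⟩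
    by_contra hcon
    push_neg at hcon
    rcases eq_or_lt_of_le hcon with h | h
    · rw [h] at he1
      linarith
    · have := HA hm1 hm2 h
      dsimp only at this
      linarith
  -- identity with gfun
  have hId : ∀ s ∈ Ioo (0:ℝ) 1,
      ((p - q) / q * (ωq s ^ q / s - 1) + 1 / s) ^ p
        / ((p / q) * (ωq s ^ q / s - 1) + 1) ^ (p - q) = gfun p q (ωq s) := by
    intro s hs
    obtain ⟨hm, he⟩ := hωq s ⟨hs.1.le, hs.2.le⟩
    obtain ⟨hw1, hwc⟩ := hωmem s hs
    set w := ωq s with hwdef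
    have hw0 : (0:ℝ) < w := by linarith
    have hs0 : (0:ℝ) < s := hs.1
    have hC : 0 < q - (q - 1) * w := by
      have h1 : (q - 1) * w < (q - 1) * (q / (q - 1)) := (mul_lt_mul_iff_right₀ hq1).mpr hwc
      linarith
    have hu : 0 < w ^ (q - 1) := Real.rpow_pos_of_pos hw0 _
    have e0 : w ^ q = w ^ (q - 1) * w := by
      rw [← Real.rpow_add_one hw0.ne' (q - 1), show q - 1 + 1 = q by ring]
    have e1 : w ^ (1 - q) = (w ^ (q - 1))⁻¹ := by
      rw [show (1:ℝ) - q = -(q - 1) by ring, Real.rpow_neg hw0.le]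
    have hs_eq : s = w ^ (q - 1) * (q - (q - 1) * w) := by rw [← he, e0]; ring
    have hwq : 0 < w ^ (1 - q) := Real.rpow_pos_of_pos hw0 _
    have hA : 0 < (p - q) * (w - 1) + w ^ (1 - q) := by nlinarith
    have hB : 0 < ((p - q) + 1) * w - (p - q) := by nlinarith
    have hA' : (p - q) / q * (w ^ q / s - 1) + 1 / s
        = ((p - q) * (w - 1) + w ^ (1 - q)) / (q - (q - 1) * w) := by
      rw [hs_eq, e0, e1]
      field_simp
      ring
    have hB' : p / q * (w ^ q / s - 1) + 1
        = (((p - q) + 1) * w - (p - q)) / (q - (q - 1) * w) := by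
      rw [hs_eq, e0]
      field_simp
      ring
    rw [hA', hB', Real.div_rpow hA.le hC.le, Real.div_rpow hB.le hC.le, gfun]
    have eC : (q - (q - 1) * w) ^ p = (q - (q - 1) * w) ^ (p - q) * (q - (q - 1) * w) ^ q := by
      rw [← Real.rpow_add hC, show p - q + q = p by ring]
    rw [eC]
    have n1 : ((q - (q - 1) * w) ^ (p - q)) ≠ 0 := (Real.rpow_pos_of_pos hC _).ne'
    have n2 : ((q - (q - 1) * w) ^ q) ≠ 0 := (Real.rpow_pos_of_pos hC _).ne'
    have n3 : ((((p - q) + 1) * w - (p - q)) ^ (p - q)) ≠ 0 := (Real.rpow_pos_of_pos hB _).ne'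
    field_simp
    have n1' : (q - w * (q - 1)) ^ (p - q) ≠ 0 := by
      rw [show q - w * (q - 1) = q - (q - 1) * w by ring]; exact n1
    rw [mul_assoc, div_mul_cancel_left₀ n1', one_div]
  refine ⟨?_, ?_, ?_⟩
  · -- strict antitonicity
    intro s1 h1 s2 h2 hlt
    dsimp only
    rw [hId s1 h1, hId s2 h2]
    exact gmono hq hpq (hωmem s2 h2) (hωmem s1 h1) (hωanti s1 h1 s2 h2 hlt)
  · -- value at 1
    rw [hω1]
    norm_num
  · -- limit at 0
    have hK : (0:ℝ) < p / (p - q) + 1 := by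
      have h := div_pos (show (0:ℝ) < p by linarith) hr
      linarith
    have hbound : ∀ s ∈ Ioo (0:ℝ) 1,
        (1 / s) ^ q / (p / (p - q) + 1) ^ (p - q)
          ≤ ((p - q) / q * (ωq s ^ q / s - 1) + 1 / s) ^ p
            / ((p / q) * (ωq s ^ q / s - 1) + 1) ^ (p - q) := by
      intro s hs
      obtain ⟨hm, he⟩ := hωq s ⟨hs.1.le, hs.2.le⟩
      have hs0 : (0:ℝ) < s := hs.1
      have hw1 : (1:ℝ) ≤ ωq s := hm.1
      have hw0 : (0:ℝ) < ωq s := by linarith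
      have hwq1 : (1:ℝ) ≤ ωq s ^ q := Real.one_le_rpow hw1 hq0.le
      have ha : 0 ≤ ωq s ^ q / s - 1 := by
        rw [sub_nonneg, le_div_iff₀ hs0]
        linarith [hs.2]
      have hs1 : (1:ℝ) ≤ 1 / s := by
        rw [le_div_iff₀ hs0]; linarith [hs.2]
      have hco : (0:ℝ) ≤ (p - q) / q := div_nonneg hr.le hq0.le
      have hterm : 0 ≤ (p - q) / q * (ωq s ^ q / s - 1) := mul_nonneg hco ha
      have hAge : 1 / s ≤ (p - q) / q * (ωq s ^ q / s - 1) + 1 / s := by linarith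
      have hA1 : (1:ℝ) ≤ (p - q) / q * (ωq s ^ q / s - 1) + 1 / s := le_trans hs1 hAge
      have hA0 : (0:ℝ) < (p - q) / q * (ωq s ^ q / s - 1) + 1 / s := by linarith
      have hterm2 : 0 ≤ p / q * (ωq s ^ q / s - 1) := mul_nonneg (div_nonneg (by linarith) hq0.le) ha
      have hB0 : (0:ℝ) < p / q * (ωq s ^ q / s - 1) + 1 := by linarith
      have e : p / q * (ωq s ^ q / s - 1)
          = p / (p - q) * ((p - q) / q * (ωq s ^ q / s - 1)) := by
        field_simp
      have h5 : p / (p - q) * ((p - q) / q * (ωq s ^ q / s - 1))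
          ≤ p / (p - q) * ((p - q) / q * (ωq s ^ q / s - 1) + 1 / s) :=
        mul_le_mul_of_nonneg_left (by linarith [lt_of_lt_of_le one_pos hs1])
          (div_nonneg (by linarith) hr.le)
      have hBle : p / q * (ωq s ^ q / s - 1) + 1
          ≤ (p / (p - q) + 1) * ((p - q) / q * (ωq s ^ q / s - 1) + 1 / s) := by
        nlinarith
      have hKA0 : (0:ℝ) < (p / (p - q) + 1) * ((p - q) / q * (ωq s ^ q / s - 1) + 1 / s) :=
        mul_pos hK hA0
      have hrpowle : (p / q * (ωq s ^ q / s - 1) + 1) ^ (p - q)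
          ≤ ((p / (p - q) + 1) * ((p - q) / q * (ωq s ^ q / s - 1) + 1 / s)) ^ (p - q) :=
        Real.rpow_le_rpow hB0.le hBle hr.le
      have eAp : ((p - q) / q * (ωq s ^ q / s - 1) + 1 / s) ^ p
          = ((p - q) / q * (ωq s ^ q / s - 1) + 1 / s) ^ q
            * ((p - q) / q * (ωq s ^ q / s - 1) + 1 / s) ^ (p - q) := by
        rw [← Real.rpow_add hA0, show q + (p - q) = p by ring]
      calc (1 / s) ^ q / (p / (p - q) + 1) ^ (p - q)
          ≤ ((p - q) / q * (ωq s ^ q / s - 1) + 1 / s) ^ q / (p / (p - q) + 1) ^ (p - q) := by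
            have hnum := Real.rpow_le_rpow (by positivity : (0:ℝ) ≤ 1 / s) hAge (by linarith : (0:ℝ) ≤ q)
            exact div_le_div_of_nonneg_right hnum (Real.rpow_pos_of_pos hK _).le
        _ = ((p - q) / q * (ωq s ^ q / s - 1) + 1 / s) ^ p
            / ((p / (p - q) + 1) * ((p - q) / q * (ωq s ^ q / s - 1) + 1 / s)) ^ (p - q) := by
            rw [Real.mul_rpow hK.le hA0.le, eAp,
              div_eq_div_iff (Real.rpow_pos_of_pos hK _).ne'
                (mul_pos (Real.rpow_pos_of_pos hK _) (Real.rpow_pos_of_pos hA0 _)).ne']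
            ring
        _ ≤ ((p - q) / q * (ωq s ^ q / s - 1) + 1 / s) ^ p
            / (p / q * (ωq s ^ q / s - 1) + 1) ^ (p - q) := by
            exact div_le_div_of_nonneg_left (Real.rpow_pos_of_pos hA0 _).le
              (Real.rpow_pos_of_pos hB0 _) hrpowle
    have t0 : Tendsto (fun s : ℝ => 1 / s) (𝓝[>] (0:ℝ)) atTop := by
      simpa [one_div] using tendsto_inv_nhdsGT_zero
    have t1 : Tendsto (fun s : ℝ => (1 / s) ^ q) (𝓝[>] (0:ℝ)) atTop :=
      (tendsto_rpow_atTop (by linarith : (0:ℝ) < q)).comp t0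
    have t2 := t1.atTop_div_const (Real.rpow_pos_of_pos hK (p - q))
    refine tendsto_atTop_mono' _ ?_ t2
    filter_upwards [Ioo_mem_nhdsGT_of_mem
      (show (0:ℝ) ∈ Ico (0:ℝ) 1 from ⟨le_refl 0, one_pos⟩)] with s hs
    exact hbound s hs
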